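/- For a symmetric 2x2 block matrix F = [[α, β],[βᵀ, C]] over a commutative unitary ring R, with X₊ = [[α,0],[βᵀ, αI]] and F̃ = [[α³,0],[0, α(αC - βᵀβ)]], one has α⁴·F = X₊ · F̃ · X₊ᵀ. -/
import Mathlib

open Matrix

theorem schmudgen_block_Fp (R : Type*) [CommRing R] (k : ℕ)
    (α : R) (β : Matrix (Fin 1) (Fin k) R) (C : Matrix (Fin k) (Fin k) R)
    (hC : Cᵀ = C)
    (F Xp Ft : Matrix (Fin 1 ⊕ Fin k) (Fin 1 ⊕ Fin k) R)
    (hF : F = Matrix.fromBlocks (α • 1) β βᵀ C)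
    (hXp : Xp = Matrix.fromBlocks (α • 1) 0 βᵀ (α • 1))
    (hFt : Ft = Matrix.fromBlocks (α ^ 3 • 1) 0 0 (α • (α • C - βᵀ * β))) :
    α ^ 4 • F = Xp * Ft * Xpᵀ := by
  subst hF hXp hFt
  rw [fromBlocks_transpose, fromBlocks_multiply, fromBlocks_multiply, fromBlocks_smul]
  ext i j
  rcases i with i | i <;> rcases j with j | j <;>
    simp [Matrix.mul_apply, Fin.sum_univ_succ, Matrix.sub_apply] <;> ring_nf
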